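/- Let n ≥ 2 and let W = {±1}^n ⋊ S_n act on ℝ^n by signed permutations of the coordinates (the common Weyl group of the root systems B_n and C_n). Let b = e₁ = (1, 0, …, 0) and let W_b ≅ {±1}^{n−1} ⋊ S_{n−1} be its stabilizer in W. Then every W_b-invariant polynomial function on ℝ^n lies in the ℝ-subalgebra generated by the W-invariant polynomial functions f together with their translates v ↦ f(v + b). -/

import Mathlib

open scoped RealInnerProductSpace

/-- The signed permutation `(ε, σ)` acting on `ℝ^n`: `x ↦ (ε i * x (σ i))_i`. -/
noncomputable def sgnPerm {n : ℕ} (ε : Fin n → ℝ) (σ : Equiv.Perm (Fin n))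
    (x : EuclideanSpace ℝ (Fin n)) : EuclideanSpace ℝ (Fin n) :=
  (WithLp.toLp 2 (fun i => ε i * x (σ i)) : EuclideanSpace ℝ (Fin n))

/-- A polynomial function on a real vector space `M`: an element of the `ℝ`-subalgebra of
`M → ℝ` generated by the linear functionals. -/
def IsPolyFun {M : Type*} [AddCommGroup M] [Module ℝ M] (f : M → ℝ) : Prop :=
  f ∈ Algebra.adjoin ℝ {g : M → ℝ | ∃ l : M →ₗ[ℝ] ℝ, g = ⇑l}

/-- Invariance of `f : ℝ^n → ℝ` under the group `W = {±1}^n ⋊ S_n` of all signed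
permutations of the coordinates. -/
def IsWInv {n : ℕ} (f : EuclideanSpace ℝ (Fin n) → ℝ) : Prop :=
  ∀ (ε : Fin n → ℝ), (∀ i, ε i = 1 ∨ ε i = -1) → ∀ σ : Equiv.Perm (Fin n),
    ∀ x, f (sgnPerm ε σ x) = f x

/-- Invariance of `f : ℝ^n → ℝ` under the group `W° = {±1}°^n ⋊ S_n` of signed
permutations with an even number of sign changes (`∏ ε i = 1`). -/
def IsW0Inv {n : ℕ} (f : EuclideanSpace ℝ (Fin n) → ℝ) : Prop :=
  ∀ (ε : Fin n → ℝ), (∀ i, ε i = 1 ∨ ε i = -1) → (∏ i, ε i = 1) →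
    ∀ σ : Equiv.Perm (Fin n), ∀ x, f (sgnPerm ε σ x) = f x

open MvPolynomial

noncomputable def Ev (N : ℕ) : MvPolynomial (Fin N) ℝ →ₐ[ℝ] (EuclideanSpace ℝ (Fin N) → ℝ) :=
  MvPolynomial.aeval (fun i => (fun x => x i))

lemma Ev_apply {N : ℕ} (P : MvPolynomial (Fin N) ℝ) (x : EuclideanSpace ℝ (Fin N)) :
    Ev N P x = MvPolynomial.eval (fun i => x i) P := by
  have h := MvPolynomial.comp_aeval (f := fun i => (fun x : EuclideanSpace ℝ (Fin N) => x i))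
    (φ := Pi.evalAlgHom ℝ (fun _ : EuclideanSpace ℝ (Fin N) => ℝ) x)
  have h2 := DFunLike.congr_fun h P
  simp only [AlgHom.comp_apply, Pi.evalAlgHom_apply] at h2
  rw [Ev, h2, MvPolynomial.aeval_def, MvPolynomial.eval, MvPolynomial.eval₂Hom]
  norm_num

lemma Ev_isPolyFun {N : ℕ} (P : MvPolynomial (Fin N) ℝ) : IsPolyFun (Ev N P) := by
  have : Ev N P ∈ AlgHom.range (Ev N) := ⟨P, rfl⟩
  rw [Ev, ← Algebra.adjoin_range_eq_range_aeval] at this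
  refine Algebra.adjoin_mono ?_ this
  rintro g ⟨i, rfl⟩
  exact ⟨(LinearMap.proj i : (Fin N → ℝ) →ₗ[ℝ] ℝ).comp (WithLp.linearEquiv 2 ℝ (Fin N → ℝ)).toLinearMap, rfl⟩

lemma isPolyFun_iff {N : ℕ} (f : EuclideanSpace ℝ (Fin N) → ℝ) :
    IsPolyFun f ↔ f ∈ AlgHom.range (Ev N) := by
  constructor
  · intro hf
    refine Algebra.adjoin_le ?_ hf
    rintro g ⟨l, rfl⟩
    refine ⟨∑ i, MvPolynomial.C (l (WithLp.toLp 2 (fun j => if i = j then (1:ℝ) else 0))) * MvPolynomial.X i, ?_⟩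
    funext x
    have hx := LinearMap.pi_apply_eq_sum_univ (l.comp (WithLp.linearEquiv 2 ℝ (Fin N → ℝ)).symm.toLinearMap) (fun i => x i)
    simp only [AlgHom.toRingHom_eq_coe, RingHom.coe_coe]
    rw [Ev_apply]
    simp only [map_sum, map_mul, MvPolynomial.eval_C, MvPolynomial.eval_X]
    rw [show l x = ∑ i, (x i) * l (WithLp.toLp 2 (fun j => if i = j then (1:ℝ) else 0)) by
      simpa [smul_eq_mul, WithLp.coe_symm_linearEquiv] using hx]
    refine Finset.sum_congr rfl fun i _ => mul_comm _ _
  · rintro ⟨P, rfl⟩; exact Ev_isPolyFun P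

noncomputable def act {N : ℕ} (ε : Fin N → ℝ) (σ : Equiv.Perm (Fin N)) :
    MvPolynomial (Fin N) ℝ →ₐ[ℝ] MvPolynomial (Fin N) ℝ :=
  aeval (fun i => C (ε i) * X (σ i))

lemma eval_act {N : ℕ} (ε : Fin N → ℝ) (σ : Equiv.Perm (Fin N))
    (P : MvPolynomial (Fin N) ℝ) (x : Fin N → ℝ) :
    eval x (act ε σ P) = eval (fun i => ε i * x (σ i)) P := by
  have h := MvPolynomial.comp_aeval (f := fun i => C (ε i) * X (σ i))
    (φ := (aeval x : MvPolynomial (Fin N) ℝ →ₐ[ℝ] ℝ))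
  have h2 := DFunLike.congr_fun h P
  simp only [AlgHom.comp_apply, map_mul, aeval_C, aeval_X,
    Algebra.algebraMap_self_apply] at h2
  have hc : ∀ (y : Fin N → ℝ) (q : MvPolynomial (Fin N) ℝ), aeval y q = eval y q := fun y q => by
    rw [MvPolynomial.aeval_def, MvPolynomial.eval, MvPolynomial.eval₂Hom]; norm_num
  rw [← hc, ← hc, act, h2]

lemma act_eq_self {N : ℕ} {f : EuclideanSpace ℝ (Fin N) → ℝ} {P : MvPolynomial (Fin N) ℝ}
    (hP : Ev N P = f) (ε : Fin N → ℝ) (σ : Equiv.Perm (Fin N))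
    (h : ∀ x, f (sgnPerm ε σ x) = f x) : act ε σ P = P := by
  apply MvPolynomial.funext
  intro x
  have h1 : eval x (act ε σ P) = f (sgnPerm ε σ (WithLp.toLp 2 x)) := by
    rw [eval_act, ← hP, Ev_apply]; rfl
  rw [h1, h (WithLp.toLp 2 x), ← hP, Ev_apply]

lemma act_one_eq_rename {N : ℕ} (σ : Equiv.Perm (Fin N)) (P : MvPolynomial (Fin N) ℝ) :
    act (fun _ => 1) σ P = rename σ P := by
  have : (fun i => C (1:ℝ) * X (σ i) : Fin N → MvPolynomial (Fin N) ℝ) = fun i => X (σ i) := by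
    funext i; rw [map_one, one_mul]
  rw [act, this]
  refine DFunLike.congr_fun (MvPolynomial.algHom_ext fun i => ?_) P
  simp

lemma coeff_act_diag {N : ℕ} (w : Fin N → ℝ) (P : MvPolynomial (Fin N) ℝ) (d : Fin N →₀ ℕ) :
    coeff d (aeval (fun j => C (w j) * X j) P) = (d.prod fun i k => w i ^ k) * coeff d P := by
  have key : ∀ (e : Fin N →₀ ℕ) (c : ℝ),
      (aeval (fun j => C (w j) * X j) (monomial e c) : MvPolynomial (Fin N) ℝ)
      = monomial e ((e.prod fun i k => w i ^ k) * c) := by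
    intro e c
    rw [aeval_monomial]
    have h1 : (e.prod fun i k => (C (w i) * X i) ^ k : MvPolynomial (Fin N) ℝ)
        = C (e.prod fun i k => w i ^ k) * e.prod fun i k => (X i : MvPolynomial (Fin N) ℝ) ^ k := by
      rw [Finsupp.prod, Finsupp.prod, Finsupp.prod, map_prod, ← Finset.prod_mul_distrib]
      exact Finset.prod_congr rfl fun i _ => by rw [mul_pow, ← map_pow]
    rw [h1, ← mul_assoc]
    rw [show (algebraMap ℝ (MvPolynomial (Fin N) ℝ)) c = C c from rfl]
    rw [← map_mul, monomial_eq, mul_comm c]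
  conv_lhs => rw [P.as_sum]
  rw [map_sum, MvPolynomial.coeff_sum]
  simp only [key, MvPolynomial.coeff_monomial]
  rw [Finset.sum_ite_eq' P.support d (fun e => (e.prod fun i k => w i ^ k) * coeff e P)]
  by_cases hd : d ∈ P.support
  · rw [if_pos hd]
  · rw [if_neg hd, MvPolynomial.notMem_support_iff.mp hd, mul_zero]

section Phi
variable {m : ℕ}

noncomputable def dbl (e : Fin (m+1) →₀ ℕ) : Fin (m+1) →₀ ℕ :=
  Finsupp.equivFunOnFinite.symm (fun j => if j = 0 then e j else 2 * e j)

noncomputable def hlf (e : Fin (m+1) →₀ ℕ) : Fin (m+1) →₀ ℕ :=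
  Finsupp.equivFunOnFinite.symm (fun j => if j = 0 then e j else e j / 2)

@[simp] lemma dbl_apply (e : Fin (m+1) →₀ ℕ) (j : Fin (m+1)) :
    dbl e j = if j = 0 then e j else 2 * e j := rfl

@[simp] lemma hlf_apply (e : Fin (m+1) →₀ ℕ) (j : Fin (m+1)) :
    hlf e j = if j = 0 then e j else e j / 2 := rfl

lemma dbl_injective : Function.Injective (dbl (m := m)) := by
  intro e1 e2 h
  ext j
  have hj := DFunLike.congr_fun h j
  simp only [dbl_apply] at hj
  by_cases h0 : j = 0
  · simpa [h0] using hj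
  · rw [if_neg h0, if_neg h0] at hj
    omega

noncomputable def Phi (m : ℕ) : MvPolynomial (Fin (m+1)) ℝ →ₐ[ℝ] MvPolynomial (Fin (m+1)) ℝ :=
  aeval (fun j => if j = 0 then X 0 else X j ^ 2)

lemma Phi_monomial (e : Fin (m+1) →₀ ℕ) (c : ℝ) :
    Phi m (monomial e c) = monomial (dbl e) c := by
  rw [Phi, aeval_monomial, monomial_eq]
  rw [show (algebraMap ℝ (MvPolynomial (Fin (m+1)) ℝ)) c = C c from rfl]
  congr 1
  rw [Finsupp.prod_fintype _ _ (fun i => pow_zero _),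
      Finsupp.prod_fintype _ _ (fun i => pow_zero _)]
  refine Finset.prod_congr rfl fun i _ => ?_
  by_cases h0 : i = 0
  · simp [h0]
  · rw [if_neg h0, dbl_apply, if_neg h0, ← pow_mul]

lemma coeff_Phi (S : MvPolynomial (Fin (m+1)) ℝ) (e : Fin (m+1) →₀ ℕ) :
    coeff (dbl e) (Phi m S) = coeff e S := by
  conv_lhs => rw [S.as_sum]
  rw [map_sum, MvPolynomial.coeff_sum]
  simp only [Phi_monomial, MvPolynomial.coeff_monomial, dbl_injective.eq_iff]
  rw [Finset.sum_ite_eq' S.support e (fun d => coeff d S)]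
  by_cases hd : e ∈ S.support
  · rw [if_pos hd]
  · rw [if_neg hd, MvPolynomial.notMem_support_iff.mp hd]

lemma Phi_injective : Function.Injective (Phi m) := by
  intro S T h
  ext e
  rw [← coeff_Phi S e, ← coeff_Phi T e, h]
end Phi

section L1
variable {m : ℕ}

def extPerm (τ : Equiv.Perm (Fin m)) : Equiv.Perm (Fin (m+1)) :=
  Equiv.Perm.decomposeFin.symm (0, τ)

lemma extPerm_zero (τ : Equiv.Perm (Fin m)) : extPerm τ 0 = 0 :=
  Equiv.Perm.decomposeFin_symm_apply_zero 0 τ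

lemma extPerm_succ (τ : Equiv.Perm (Fin m)) (i : Fin m) : extPerm τ i.succ = (τ i).succ := by
  rw [extPerm, Equiv.Perm.decomposeFin_symm_apply_succ]
  simp

lemma coeff_rename_perm {σ : Type*} (τ : Equiv.Perm σ) (q : MvPolynomial σ ℝ) (d : σ →₀ ℕ) :
    (rename τ q).coeff d = q.coeff (Finsupp.mapDomain τ.symm d) := by
  have h := coeff_rename_mapDomain (⇑τ) τ.injective q (Finsupp.mapDomain τ.symm d)
  rw [← Finsupp.mapDomain_comp] at h
  simpa [Finsupp.mapDomain_id] using h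

lemma finSuccEquiv_symm_C (q : MvPolynomial (Fin m) ℝ) :
    (MvPolynomial.finSuccEquiv ℝ m).symm (Polynomial.C q) = rename Fin.succ q := by
  rw [AlgEquiv.symm_apply_eq]
  induction q using MvPolynomial.induction_on with
  | C r => simp [MvPolynomial.finSuccEquiv_apply]
  | add p q hp hq => rw [map_add, map_add, map_add, hp, hq]
  | mul_X p i hp =>
    rw [map_mul, map_mul, map_mul, hp, rename_X, MvPolynomial.finSuccEquiv_X_succ]


lemma hmap_lemma (τ : Equiv.Perm (Fin m)) (j : ℕ) (d : Fin m →₀ ℕ) :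
    Finsupp.mapDomain (⇑(extPerm τ)) (Finsupp.cons j d)
      = Finsupp.cons j (Finsupp.mapDomain (⇑τ) d) := by
  have hsymm0 : (extPerm τ).symm 0 = 0 := (Equiv.symm_apply_eq _).mpr (extPerm_zero τ).symm
  have hsymms : ∀ i : Fin m, (extPerm τ).symm i.succ = (τ.symm i).succ := fun i =>
    (Equiv.symm_apply_eq _).mpr (by rw [extPerm_succ, Equiv.apply_symm_apply])
  ext a
  rw [Finsupp.mapDomain_equiv_apply]
  induction a using Fin.cases with
  | zero => rw [hsymm0, Finsupp.cons_zero, Finsupp.cons_zero]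
  | succ i =>
      rw [hsymms, Finsupp.cons_succ, Finsupp.cons_succ, Finsupp.mapDomain_equiv_apply]

lemma hsym_lemma (Q : MvPolynomial (Fin (m+1)) ℝ)
    (hQ : ∀ σ : Equiv.Perm (Fin (m+1)), σ 0 = 0 → rename σ Q = Q) (j : ℕ) :
    (((MvPolynomial.finSuccEquiv ℝ m) Q).coeff j).IsSymmetric := by
  intro τ
  ext d
  rw [coeff_rename_perm, MvPolynomial.finSuccEquiv_coeff_coeff,
      MvPolynomial.finSuccEquiv_coeff_coeff]
  have h2 := coeff_rename_mapDomain (⇑(extPerm τ.symm)) (extPerm τ.symm).injective Q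
    (Finsupp.cons j d)
  rw [hQ _ (extPerm_zero _), hmap_lemma] at h2
  exact h2

lemma reconstruct (Q : MvPolynomial (Fin (m+1)) ℝ) :
    Q = ∑ j ∈ ((MvPolynomial.finSuccEquiv ℝ m) Q).support,
      rename Fin.succ (((MvPolynomial.finSuccEquiv ℝ m) Q).coeff j) * (X 0) ^ j := by
  set D := MvPolynomial.finSuccEquiv ℝ m with hD
  conv_lhs => rw [show Q = D.symm (D Q) from (AlgEquiv.symm_apply_apply D Q).symm]
  conv_lhs => rw [Polynomial.as_sum_support (D Q)]
  rw [map_sum]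
  refine Finset.sum_congr rfl fun j _ => ?_
  rw [← Polynomial.C_mul_X_pow_eq_monomial, map_mul, map_pow, finSuccEquiv_symm_C]
  congr 1
  rw [show (Polynomial.X : Polynomial (MvPolynomial (Fin m) ℝ)) = D (X 0) from
    (MvPolynomial.finSuccEquiv_X_zero).symm, AlgEquiv.symm_apply_apply]

lemma hcoeff_lemma {m : ℕ} (q : MvPolynomial (Fin m) ℝ) (hq : q.IsSymmetric) :
    q ∈ Algebra.adjoin ℝ (Set.range (fun k : ℕ => MvPolynomial.esymm (Fin m) ℝ k)) := by
  obtain ⟨r, hr⟩ := MvPolynomial.esymmAlgHom_surjective (R := ℝ) (σ := Fin m) (n := m)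
    (by simp) ⟨q, hq⟩
  have hval : MvPolynomial.aeval (fun i : Fin m => MvPolynomial.esymm (Fin m) ℝ (i + 1)) r
      = q := by
    rw [← MvPolynomial.esymmAlgHom_apply, hr]
  rw [← hval]
  have hmem : MvPolynomial.aeval (fun i : Fin m => MvPolynomial.esymm (Fin m) ℝ (i + 1)) r ∈
      Algebra.adjoin ℝ (Set.range (fun i : Fin m => MvPolynomial.esymm (Fin m) ℝ (i + 1))) := by
    rw [Algebra.adjoin_range_eq_range_aeval]; exact ⟨r, rfl⟩
  refine Algebra.adjoin_mono ?_ hmem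
  rintro g ⟨i, rfl⟩
  exact ⟨(i : ℕ) + 1, rfl⟩

set_option maxHeartbeats 1000000 in
lemma mem_adjoin_of_symm0 (Q : MvPolynomial (Fin (m+1)) ℝ)
    (hQ : ∀ σ : Equiv.Perm (Fin (m+1)), σ 0 = 0 → rename σ Q = Q) :
    Q ∈ Algebra.adjoin ℝ
      ({X 0} ∪ Set.range (fun k : ℕ => rename Fin.succ (MvPolynomial.esymm (Fin m) ℝ k))) := by
  rw [reconstruct Q]
  refine Subalgebra.sum_mem _ fun j _ => Subalgebra.mul_mem _ ?_ ?_
  · have hm : rename Fin.succ (((MvPolynomial.finSuccEquiv ℝ m) Q).coeff j) ∈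
        (Algebra.adjoin ℝ (Set.range (fun k : ℕ => MvPolynomial.esymm (Fin m) ℝ k))).map
          (rename (R := ℝ) Fin.succ) := ⟨_, hcoeff_lemma _ (hsym_lemma Q hQ j), rfl⟩
    rw [AlgHom.map_adjoin] at hm
    refine Algebra.adjoin_mono ?_ hm
    rintro g ⟨-, ⟨k, rfl⟩, rfl⟩
    exact Set.mem_union_right _ ⟨k, rfl⟩
  · refine Subalgebra.pow_mem _ (Algebra.subset_adjoin ?_) j
    exact Set.mem_union_left _ rfl

end L1

lemma esymm_rec (m k : ℕ) :
    esymm (Fin (m+1)) ℝ (k+1)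
      = rename Fin.succ (esymm (Fin m) ℝ (k+1))
        + X 0 * rename Fin.succ (esymm (Fin m) ℝ k) := by
  have hren : ∀ j : ℕ, rename (R := ℝ) Fin.succ (esymm (Fin m) ℝ j)
      = ∑ t ∈ Finset.powersetCard j (Finset.univ.map ⟨Fin.succ, Fin.succ_injective m⟩),
          ∏ i ∈ t, (X i : MvPolynomial (Fin (m+1)) ℝ) := by
    intro j
    rw [MvPolynomial.esymm, map_sum, Finset.powersetCard_map, Finset.sum_map]
    refine Finset.sum_congr rfl fun t _ => ?_
    rw [map_prod, RelEmbedding.coe_toEmbedding]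
    rw [Finset.mapEmbedding_apply, Finset.prod_map]
    exact Finset.prod_congr rfl fun i _ => rename_X _ _
  have h0 : (0 : Fin (m+1)) ∉ Finset.univ.map ⟨Fin.succ, Fin.succ_injective m⟩ := by
    simp [Finset.mem_map, Fin.succ_ne_zero]
  rw [MvPolynomial.esymm, show (Finset.univ : Finset (Fin (m+1)))
      = insert 0 (Finset.univ.map ⟨Fin.succ, Fin.succ_injective m⟩) by
        rw [Fin.univ_succ, Finset.cons_eq_insert]]
  rw [Finset.powersetCard_succ_insert h0]
  rw [Finset.sum_union ?hdisj]
  case hdisj =>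
    rw [Finset.disjoint_left]
    intro t ht ht'
    rw [Finset.mem_powersetCard] at ht
    rw [Finset.mem_image] at ht'
    obtain ⟨s, hs, rfl⟩ := ht'
    exact h0 (ht.1 (Finset.mem_insert_self 0 s))
  congr 1
  · rw [hren]
  · rw [hren, Finset.sum_image ?hinj, Finset.mul_sum]
    case hinj =>
      intro s hs s' hs' h
      rw [Finset.mem_coe, Finset.mem_powersetCard] at hs hs'
      have h1 : 0 ∉ s := fun h' => h0 (hs.1 h')
      have h2 : 0 ∉ s' := fun h' => h0 (hs'.1 h')
      rw [← Finset.erase_insert h1, ← Finset.erase_insert h2, h]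
    refine Finset.sum_congr rfl fun s hs => ?_
    rw [Finset.mem_powersetCard] at hs
    rw [Finset.prod_insert (fun h' => h0 (hs.1 h'))]

section Sq
variable {m : ℕ}

noncomputable def sqh (m : ℕ) : MvPolynomial (Fin (m+1)) ℝ →ₐ[ℝ] MvPolynomial (Fin (m+1)) ℝ :=
  aeval (fun i => X i ^ 2)

lemma act_sqh (ε : Fin (m+1) → ℝ) (hε : ∀ i, ε i = 1 ∨ ε i = -1) (σ : Equiv.Perm (Fin (m+1)))
    (p : MvPolynomial (Fin (m+1)) ℝ) :
    act ε σ (sqh m p) = sqh m (rename σ p) := by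
  have h1 : (act ε σ).comp (sqh m) = (sqh m).comp (rename σ) := by
    refine MvPolynomial.algHom_ext fun i => ?_
    simp only [AlgHom.comp_apply, sqh, aeval_X, rename_X, act, map_pow, map_mul]
    rcases hε i with h | h <;> rw [mul_pow, h] <;> ring_nf <;> simp [map_neg, map_one]
  exact DFunLike.congr_fun h1 p

lemma act_sqh_esymm (ε : Fin (m+1) → ℝ) (hε : ∀ i, ε i = 1 ∨ ε i = -1)
    (σ : Equiv.Perm (Fin (m+1))) (k : ℕ) :
    act ε σ (sqh m (esymm (Fin (m+1)) ℝ k)) = sqh m (esymm (Fin (m+1)) ℝ k) := by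
  rw [act_sqh ε hε σ, esymm_isSymmetric _ _ _ σ]

lemma Phi_comp_rename (σ : Equiv.Perm (Fin (m+1))) (hσ : σ 0 = 0)
    (Q : MvPolynomial (Fin (m+1)) ℝ) :
    Phi m (rename σ Q) = rename σ (Phi m Q) := by
  have h1 : (Phi m).comp (rename (σ : Fin (m+1) → Fin (m+1)))
      = (rename (σ : Fin (m+1) → Fin (m+1))).comp (Phi m) := by
    refine MvPolynomial.algHom_ext fun i => ?_
    simp only [AlgHom.comp_apply, rename_X, Phi, aeval_X]
    by_cases h : i = 0
    · subst h; rw [if_pos hσ, if_pos rfl, rename_X, hσ]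
    · have hσi : σ i ≠ 0 := fun hc => h (σ.injective (hc.trans hσ.symm))
      rw [if_neg hσi, if_neg h, map_pow, rename_X]
  exact DFunLike.congr_fun h1 Q

lemma Phi_comp_rename_succ (q : MvPolynomial (Fin m) ℝ) :
    Phi m (rename Fin.succ q) = sqh m (rename Fin.succ q) := by
  have h1 : (Phi m).comp (rename (R := ℝ) (Fin.succ : Fin m → Fin (m+1)))
      = (sqh m).comp (rename (R := ℝ) Fin.succ) := by
    refine MvPolynomial.algHom_ext fun i => ?_
    simp only [AlgHom.comp_apply, rename_X, Phi, sqh, aeval_X]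
    rw [if_neg (Fin.succ_ne_zero i)]
  exact DFunLike.congr_fun h1 q

lemma Phi_X_zero : Phi m (X 0) = X 0 := by
  rw [Phi, aeval_X, if_pos rfl]
end Sq

lemma isWInv_Ev_sqh_esymm (m k : ℕ) :
    IsWInv (Ev (m+1) (sqh m (esymm (Fin (m+1)) ℝ k))) := by
  intro ε hε σ x
  rw [Ev_apply, Ev_apply]
  have h := eval_act ε σ (sqh m (esymm (Fin (m+1)) ℝ k)) (fun i => x i)
  rw [act_sqh_esymm ε hε σ k] at h
  exact h.symm

lemma Ev_sqh_esymm_one_apply (m : ℕ) (v : EuclideanSpace ℝ (Fin (m+1))) :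
    Ev (m+1) (sqh m (esymm (Fin (m+1)) ℝ 1)) v = ∑ i, (v i)^2 := by
  rw [Ev_apply, MvPolynomial.esymm_one, map_sum, map_sum]
  refine Finset.sum_congr rfl fun i _ => ?_
  rw [sqh, aeval_X, map_pow, eval_X]


theorem BC_stabilizer_of_b_invariants_generated
    (n : ℕ) (hn : 2 ≤ n)
    (b : EuclideanSpace ℝ (Fin n))
    (hb : ∀ i : Fin n, b i = if (i : ℕ) = 0 then (1 : ℝ) else 0)
    (f : EuclideanSpace ℝ (Fin n) → ℝ) (hf : IsPolyFun f)
    -- `f` is invariant under the stabilizer `W_b` of `b` in `W`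
    (hinv : ∀ (ε : Fin n → ℝ), (∀ i, ε i = 1 ∨ ε i = -1) → ∀ σ : Equiv.Perm (Fin n),
      sgnPerm ε σ b = b → ∀ x, f (sgnPerm ε σ x) = f x) :
    f ∈ Algebra.adjoin ℝ
      ({g : EuclideanSpace ℝ (Fin n) → ℝ | IsPolyFun g ∧ IsWInv g} ∪
       {g : EuclideanSpace ℝ (Fin n) → ℝ | ∃ h : EuclideanSpace ℝ (Fin n) → ℝ,
          (IsPolyFun h ∧ IsWInv h) ∧ g = fun v => h (v + b)}) := by
  obtain ⟨m, rfl⟩ : ∃ m, n = m + 1 := ⟨n - 1, by omega⟩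
  obtain ⟨P, hP0⟩ := (isPolyFun_iff f).mp hf
  have hP : Ev (m+1) P = f := hP0
  set A := Algebra.adjoin ℝ
      ({g : EuclideanSpace ℝ (Fin (m+1)) → ℝ | IsPolyFun g ∧ IsWInv g} ∪
       {g : EuclideanSpace ℝ (Fin (m+1)) → ℝ | ∃ h : EuclideanSpace ℝ (Fin (m+1)) → ℝ,
          (IsPolyFun h ∧ IsWInv h) ∧ g = fun v => h (v + b)}) with hA
  show f ∈ A
  -- facts about b
  have hb0 : b 0 = 1 := by rw [hb]; norm_num
  have hbne : ∀ i : Fin (m+1), i ≠ 0 → b i = 0 := by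
    intro i hi
    rw [hb, if_neg]
    exact fun h => hi (Fin.ext (by simpa using h))
  -- membership of the W-invariant squares-esymm functions
  have hgkA : ∀ k : ℕ, Ev (m+1) (sqh m (esymm (Fin (m+1)) ℝ k)) ∈ A :=
    fun k => Algebra.subset_adjoin (Set.mem_union_left _
      ⟨Ev_isPolyFun _, isWInv_Ev_sqh_esymm m k⟩)
  -- membership of the coordinate function x ↦ x 0
  have hg1shift : (fun v : EuclideanSpace ℝ (Fin (m+1)) =>
      Ev (m+1) (sqh m (esymm (Fin (m+1)) ℝ 1)) (v + b)) ∈ A :=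
    Algebra.subset_adjoin (Set.mem_union_right _
      ⟨_, ⟨Ev_isPolyFun _, isWInv_Ev_sqh_esymm m 1⟩, rfl⟩)
  have hx0 : Ev (m+1) (X 0) ∈ A := by
    have hkey : Ev (m+1) (X 0) = (2⁻¹ : ℝ) •
        ((fun v : EuclideanSpace ℝ (Fin (m+1)) =>
          Ev (m+1) (sqh m (esymm (Fin (m+1)) ℝ 1)) (v + b))
         - Ev (m+1) (sqh m (esymm (Fin (m+1)) ℝ 1)) - 1) := by
      funext v
      have hvb : ∀ i, (v + b) i = v i + b i := fun i => rfl
      have h1 : Ev (m+1) (sqh m (esymm (Fin (m+1)) ℝ 1)) (v + b) = (∑ i, (v i)^2) + (2 * v 0 + 1) := by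
        rw [Ev_sqh_esymm_one_apply]
        have : ∀ i : Fin (m+1), ((v + b) i)^2
            = (v i)^2 + (if i = 0 then 2 * v i + 1 else 0) := by
          intro i
          rw [hvb]
          by_cases h : i = 0
          · subst h; rw [hb0, if_pos rfl]; ring
          · rw [hbne i h, if_neg h]; ring
        rw [Finset.sum_congr rfl fun i _ => this i, Finset.sum_add_distrib,
          Finset.sum_ite_eq' Finset.univ (0 : Fin (m+1)) (fun i => 2 * v i + 1)]
        simp
      have h2 : Ev (m+1) (X 0) v = v 0 := by rw [Ev_apply, eval_X]
      simp only [Pi.smul_apply, Pi.sub_apply, Pi.one_apply, smul_eq_mul]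
      rw [h1, h2, Ev_sqh_esymm_one_apply]
      ring
    rw [hkey]
    exact Subalgebra.smul_mem _ (sub_mem (sub_mem hg1shift (hgkA 1)) (one_mem _)) _
  -- membership of the nonzero-variables esymm-of-squares functions
  have hsubA : ∀ k : ℕ, Ev (m+1) (sqh m (rename Fin.succ (esymm (Fin m) ℝ k))) ∈ A := by
    intro k
    induction k with
    | zero =>
      simp only [MvPolynomial.esymm_zero, map_one]
      exact one_mem _
    | succ k ih =>
      have hstep : sqh m (rename Fin.succ (esymm (Fin m) ℝ (k+1)))
          = sqh m (esymm (Fin (m+1)) ℝ (k+1))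
            - (X 0)^2 * sqh m (rename Fin.succ (esymm (Fin m) ℝ k)) := by
        have hrec := congrArg (sqh m) (esymm_rec m k)
        rw [map_add, map_mul] at hrec
        rw [hrec, sqh, aeval_X]
        ring
      rw [hstep, map_sub, map_mul, map_pow]
      exact sub_mem (hgkA (k+1)) (mul_mem (pow_mem hx0 2) ih)
  -- rename invariance of P
  have hren : ∀ σ : Equiv.Perm (Fin (m+1)), σ 0 = 0 → rename σ P = P := by
    intro σ hσ
    rw [← act_one_eq_rename]
    refine act_eq_self hP _ σ (hinv _ (fun i => Or.inl rfl) σ ?_)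
    refine PiLp.ext fun i => ?_
    show (1:ℝ) * b (σ i) = b i
    by_cases h : i = 0
    · subst h; rw [hσ, one_mul]
    · rw [hbne (σ i) (fun hc => h (σ.injective (hc.trans hσ.symm))), hbne i h, one_mul]
  -- evenness of exponents of nonzero variables
  have heven : ∀ d ∈ P.support, ∀ i0 : Fin (m+1), i0 ≠ 0 → Even (d i0) := by
    intro d hd i0 hi0
    by_contra hodd
    rw [Nat.not_even_iff_odd] at hodd
    set ε : Fin (m+1) → ℝ := fun j => if j = i0 then -1 else 1 with hεdef
    have hεpm : ∀ i, ε i = 1 ∨ ε i = -1 := fun i => by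
      by_cases h : i = i0 <;> simp [hεdef, h]
    have hstab : sgnPerm ε 1 b = b := by
      refine PiLp.ext fun i => ?_
      show ε i * b ((1 : Equiv.Perm (Fin (m+1))) i) = b i
      rw [Equiv.Perm.one_apply]
      by_cases h : i = i0
      · subst h; rw [hbne _ hi0]; ring
      · simp [hεdef, h]
    have hact := act_eq_self hP ε 1 (hinv ε hεpm 1 hstab)
    have hact2 : aeval (fun j => C (ε j) * X j) P = P := hact
    have hc := congrArg (coeff d) hact2
    rw [coeff_act_diag] at hc
    have hprod : (d.prod fun i k => ε i ^ k) = (-1 : ℝ) ^ (d i0) := by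
      rw [Finsupp.prod_fintype _ _ (fun i => pow_zero _)]
      rw [Finset.prod_eq_single i0 (fun i _ hne => by simp [hεdef, hne])
        (fun h => absurd (Finset.mem_univ i0) h)]
      simp [hεdef]
    rw [hprod, hodd.neg_one_pow, neg_one_mul] at hc
    have hzero : coeff d P = 0 := by linarith
    exact (MvPolynomial.mem_support_iff.mp hd) hzero
  -- halved polynomial
  set Q := ∑ d ∈ P.support, monomial (hlf d) (coeff d P) with hQdef
  have hPhiQ : Phi m Q = P := by
    rw [hQdef, map_sum]
    conv_rhs => rw [P.as_sum]
    refine Finset.sum_congr rfl fun d hd => ?_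
    rw [Phi_monomial]
    have hdd : dbl (hlf d) = d := by
      ext j
      rw [dbl_apply]
      by_cases h : j = 0
      · simp [h]
      · rw [if_neg h, hlf_apply, if_neg h]
        exact Nat.mul_div_cancel' (heven d hd j h).two_dvd
    rw [hdd]
  have hQsym : ∀ σ : Equiv.Perm (Fin (m+1)), σ 0 = 0 → rename σ Q = Q := by
    intro σ hσ
    apply Phi_injective
    rw [Phi_comp_rename σ hσ, hPhiQ, hren σ hσ]
  have hQmem := mem_adjoin_of_symm0 Q hQsym
  -- push membership through Phi and Ev
  have hPmem : P ∈ Algebra.adjoin ℝ ((Phi m) ''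
      ({X 0} ∪ Set.range (fun k : ℕ => rename Fin.succ (MvPolynomial.esymm (Fin m) ℝ k)))) := by
    have : Phi m Q ∈ (Algebra.adjoin ℝ
        ({X 0} ∪ Set.range (fun k : ℕ => rename Fin.succ (MvPolynomial.esymm (Fin m) ℝ k)))).map
        (Phi m) := ⟨Q, hQmem, rfl⟩
    rw [AlgHom.map_adjoin] at this
    rwa [hPhiQ] at this
  have hfmem : f ∈ Algebra.adjoin ℝ (Ev (m+1) '' ((Phi m) ''
      ({X 0} ∪ Set.range (fun k : ℕ => rename Fin.succ (MvPolynomial.esymm (Fin m) ℝ k))))) := by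
    have : Ev (m+1) P ∈ (Algebra.adjoin ℝ ((Phi m) ''
        ({X 0} ∪ Set.range (fun k : ℕ => rename Fin.succ (MvPolynomial.esymm (Fin m) ℝ k))))).map
        (Ev (m+1)) := ⟨P, hPmem, rfl⟩
    rw [AlgHom.map_adjoin] at this
    rwa [hP] at this
  refine Algebra.adjoin_le ?_ hfmem
  rintro g ⟨-, ⟨p, hp, rfl⟩, rfl⟩
  rcases hp with hp | ⟨k, rfl⟩
  · rw [Set.mem_singleton_iff] at hp
    subst hp
    rw [Phi_X_zero]
    exact hx0
  · rw [Phi_comp_rename_succ]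
    exact hsubA k
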